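/- For any three positive integers a ≤ b ≤ c satisfying c ≤ a·b, there exists a tripartite pure state |ψ⟩_{ABC} with Schmidt ranks r_A = a, r_B = b, r_{AB} = c (where r_{AB} is the rank across the AB : C bipartition). -/

import Mathlib

open Matrix

/-- Rank of a matrix whose columns are distinct standard basis vectors or zero,
encoded by a partial function `g`. -/
lemma rank_optIndicator {ι κ : Type} [Fintype ι] [Fintype κ] [DecidableEq ι] [DecidableEq κ]
    (g : κ → Option ι) (M : Matrix ι κ ℂ)
    (hM : ∀ i k, M i k = if g k = some i then 1 else 0) :
    M.rank = Fintype.card {i : ι // ∃ k, g k = some i} := by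
  classical
  have hdiag : M * Mᴴ = Matrix.diagonal
      (fun i => ((Finset.univ.filter (fun k => g k = some i)).card : ℂ)) := by
    ext i i'
    simp only [Matrix.mul_apply, Matrix.conjTranspose_apply, hM, Matrix.diagonal_apply]
    by_cases h : i = i'
    · subst h
      rw [if_pos rfl, Finset.card_filter]
      push_cast
      apply Finset.sum_congr rfl
      intro k _
      by_cases hk : g k = some i <;> simp [hk]
    · rw [if_neg h]
      apply Finset.sum_eq_zero
      intro k _
      by_cases hk : g k = some i
      · have hk' : g k ≠ some i' := by
          rw [hk]; simp [h]
        simp [hk, hk', h]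
      · simp [hk]
  open ComplexOrder in
  rw [← Matrix.rank_self_mul_conjTranspose M, hdiag, Matrix.rank_diagonal]
  apply Fintype.card_congr
  apply Equiv.subtypeEquivRight
  intro i
  constructor
  · intro h
    have hne : (Finset.univ.filter (fun k => g k = some i)).Nonempty := by
      rw [Finset.nonempty_iff_ne_empty]
      intro hemp
      apply h
      rw [hemp]
      simp
    obtain ⟨k, hk⟩ := hne
    exact ⟨k, (Finset.mem_filter.mp hk).2⟩
  · rintro ⟨k, hk⟩ h0
    have hmem : k ∈ Finset.univ.filter (fun k => g k = some i) :=
      Finset.mem_filter.mpr ⟨Finset.mem_univ _, hk⟩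
    have hcard : 0 < (Finset.univ.filter fun k => g k = some i).card :=
      Finset.card_pos.mpr ⟨k, hmem⟩
    rw [Nat.cast_eq_zero] at h0
    omega

/-- Auxiliary function: an explicit injection of `[0,c)` into `[0,a) × [0,b)`
hitting every value in both coordinates. -/
def Ffun (a b : ℕ) (i : ℕ) : ℕ × ℕ :=
  if i < b then (i % a, i)
  else (((i - b) / (a - 1) + 1 + (i - b) % (a - 1)) % a, (i - b) / (a - 1))

lemma Ffun_fst_lt {a : ℕ} (ha : 0 < a) (b i : ℕ) : (Ffun a b i).1 < a := by
  unfold Ffun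
  split <;> exact Nat.mod_lt _ ha

lemma two_le_of_branch {a b c i : ℕ} (hc : c ≤ a * b) (hi : i < c) (hbi : b ≤ i) : 2 ≤ a := by
  rcases Nat.lt_or_ge a 2 with h | h
  · interval_cases a
    · simp at hc; omega
    · simp at hc; omega
  · exact h

lemma Ffun_snd_lt {a b c : ℕ} (ha : 0 < a) (hab : a ≤ b) (hc : c ≤ a * b)
    {i : ℕ} (hi : i < c) : (Ffun a b i).2 < b := by
  by_cases h : i < b
  · rw [Ffun, if_pos h]
    exact h
  · rw [Ffun, if_neg h]
    have hbi : b ≤ i := Nat.le_of_not_lt h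
    have ha2 : 2 ≤ a := two_le_of_branch hc hi hbi
    have hsm : (a - 1) * b = a * b - 1 * b := Nat.sub_mul a 1 b
    rw [one_mul] at hsm
    have hub : i - b < (a - 1) * b := by
      have : i < a * b := lt_of_lt_of_le hi hc
      omega
    show (i - b) / (a - 1) < b
    rw [Nat.div_lt_iff_lt_mul (by omega : 0 < a - 1), Nat.mul_comm]
    omega

lemma Ffun_inj {a b c : ℕ} (ha : 0 < a) (hab : a ≤ b) (hc : c ≤ a * b)
    {i j : ℕ} (hi : i < c) (hj : j < c) (h : Ffun a b i = Ffun a b j) : i = j := by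
  unfold Ffun at h
  have key : ∀ y t : ℕ, t < a - 1 → y % a ≠ (y + 1 + t) % a := by
    intro y t ht hmod
    have : (y + 0) % a = (y + (1 + t)) % a := by
      rw [Nat.add_zero]; rw [hmod]; ring_nf
    have h2 : (0 : ℕ) % a = (1 + t) % a := by
      have := (Nat.ModEq.add_left_cancel' y (this : Nat.ModEq a (y + 0) (y + (1 + t))))
      exact this
    rw [Nat.zero_mod, Nat.mod_eq_of_lt (by omega : 1 + t < a)] at h2
    omega
  by_cases h1 : i < b <;> by_cases h2 : j < b
  · rw [if_pos h1, if_pos h2] at h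
    exact congrArg Prod.snd h
  · rw [if_pos h1, if_neg h2] at h
    have ha2 : 2 ≤ a := two_le_of_branch hc hj (Nat.le_of_not_lt h2)
    have hsnd : i = (j - b) / (a - 1) := congrArg Prod.snd h
    have hfst : i % a = ((j - b) / (a - 1) + 1 + (j - b) % (a - 1)) % a := congrArg Prod.fst h
    rw [← hsnd] at hfst
    exact absurd hfst (key i _ (Nat.mod_lt _ (by omega)))
  · rw [if_neg h1, if_pos h2] at h
    have ha2 : 2 ≤ a := two_le_of_branch hc hi (Nat.le_of_not_lt h1)
    have hsnd : (i - b) / (a - 1) = j := congrArg Prod.snd h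
    have hfst : ((i - b) / (a - 1) + 1 + (i - b) % (a - 1)) % a = j % a := congrArg Prod.fst h
    rw [hsnd] at hfst
    exact absurd hfst.symm (key j _ (Nat.mod_lt _ (by omega)))
  · rw [if_neg h1, if_neg h2] at h
    have ha2 : 2 ≤ a := two_le_of_branch hc hi (Nat.le_of_not_lt h1)
    have hsnd : (i - b) / (a - 1) = (j - b) / (a - 1) := congrArg Prod.snd h
    have hfst : ((i - b) / (a - 1) + 1 + (i - b) % (a - 1)) % a
        = ((j - b) / (a - 1) + 1 + (j - b) % (a - 1)) % a := congrArg Prod.fst h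
    rw [hsnd] at hfst
    have hmodeq : Nat.ModEq a ((j - b) / (a - 1) + 1 + (i - b) % (a - 1))
        ((j - b) / (a - 1) + 1 + (j - b) % (a - 1)) := hfst
    have hmm := Nat.ModEq.add_left_cancel' ((j - b) / (a - 1) + 1) hmodeq
    have hlt1 : (i - b) % (a - 1) < a := lt_of_lt_of_le (Nat.mod_lt _ (by omega)) (by omega)
    have hlt2 : (j - b) % (a - 1) < a := lt_of_lt_of_le (Nat.mod_lt _ (by omega)) (by omega)
    have hmeq : (i - b) % (a - 1) = (j - b) % (a - 1) := by
      have h' : (i - b) % (a - 1) % a = (j - b) % (a - 1) % a := hmm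
      rwa [Nat.mod_eq_of_lt hlt1, Nat.mod_eq_of_lt hlt2] at h'
    have e1 := Nat.div_add_mod (i - b) (a - 1)
    have e2 := Nat.div_add_mod (j - b) (a - 1)
    rw [hsnd, hmeq] at e1
    have hij : i - b = j - b := e1.symm.trans e2
    have hib : b ≤ i := Nat.le_of_not_lt h1
    have hjb : b ≤ j := Nat.le_of_not_lt h2
    omega

/-- For positive integers `a ≤ b ≤ c` with `c ≤ a·b`, there exists a tripartite
pure state with Schmidt ranks `r_A = a`, `r_B = b` and `r_AB = c` (rank across the
`AB : C` bipartition). -/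
theorem exists_tripartite_state_with_ranks
    (a b c : ℕ) (ha : 0 < a) (hab : a ≤ b) (hbc : b ≤ c) (hc : c ≤ a * b) :
    ∃ (dA dB dC : ℕ) (ψ : Fin dA → Fin dB → Fin dC → ℂ), ψ ≠ 0 ∧
      (Matrix.of fun (x : Fin dA) (y : Fin dB × Fin dC) => ψ x y.1 y.2).rank = a ∧
      (Matrix.of fun (x : Fin dB) (y : Fin dA × Fin dC) => ψ y.1 x y.2).rank = b ∧
      (Matrix.of fun (x : Fin dA × Fin dB) (y : Fin dC) => ψ x.1 x.2 y).rank = c := by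
  classical
  refine ⟨a, b, c, ?_⟩
  -- the injection
  set f : Fin c → Fin a × Fin b := fun z =>
    (⟨(Ffun a b z.val).1, Ffun_fst_lt ha b z.val⟩,
     ⟨(Ffun a b z.val).2, Ffun_snd_lt ha hab hc z.isLt⟩) with hf
  have hfinj : Function.Injective f := by
    intro z w hzw
    have h1 : (Ffun a b z.val).1 = (Ffun a b w.val).1 := congrArg (fun p => (p.1 : Fin a).val) hzw
    have h2 : (Ffun a b z.val).2 = (Ffun a b w.val).2 := congrArg (fun p => (p.2 : Fin b).val) hzw
    have : Ffun a b z.val = Ffun a b w.val := Prod.ext h1 h2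
    exact Fin.ext (Ffun_inj ha hab hc z.isLt w.isLt this)
  have hfst_surj : ∀ x : Fin a, ∃ z : Fin c, (f z).1 = x := by
    intro x
    refine ⟨⟨x.val, lt_of_lt_of_le x.isLt (le_trans hab hbc)⟩, ?_⟩
    have hxb : (x.val : ℕ) < b := lt_of_lt_of_le x.isLt hab
    simp only [hf]
    apply Fin.ext
    simp [Ffun, hxb, Nat.mod_eq_of_lt x.isLt]
  have hsnd_surj : ∀ y : Fin b, ∃ z : Fin c, (f z).2 = y := by
    intro y
    refine ⟨⟨y.val, lt_of_lt_of_le y.isLt hbc⟩, ?_⟩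
    simp only [hf]
    apply Fin.ext
    simp [Ffun, y.isLt]
  set ψ : Fin a → Fin b → Fin c → ℂ := fun x y z => if f z = (x, y) then 1 else 0 with hψ
  refine ⟨ψ, ?_, ?_, ?_, ?_⟩
  · -- ψ ≠ 0
    intro h0
    have hc0 : 0 < c := lt_of_lt_of_le ha (le_trans hab hbc)
    have := congrFun (congrFun (congrFun h0 (f ⟨0, hc0⟩).1) (f ⟨0, hc0⟩).2) ⟨0, hc0⟩
    simp [hψ] at this
  · -- rank A = a
    have := rank_optIndicator
      (fun p : Fin b × Fin c => if (f p.2).2 = p.1 then some (f p.2).1 else none)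
      (Matrix.of fun (x : Fin a) (y : Fin b × Fin c) => ψ x y.1 y.2) ?_
    · rw [this]
      rw [Fintype.card_congr (Equiv.subtypeUnivEquiv ?_), Fintype.card_fin]
      intro x
      obtain ⟨z, hz⟩ := hfst_surj x
      refine ⟨((f z).2, z), ?_⟩
      rw [if_pos rfl]
      exact congrArg some hz
    · intro x p
      show (if f p.2 = (x, p.1) then (1:ℂ) else 0)
          = if (if (f p.2).2 = p.1 then some (f p.2).1 else none) = some x then 1 else 0
      rcases eq_or_ne (f p.2) (x, p.1) with he | he
      · rw [if_pos he, if_pos (show (f p.2).2 = p.1 by rw [he]),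
          if_pos (show some (f p.2).1 = some x by rw [he])]
      · rw [if_neg he]
        by_cases h : (f p.2).2 = p.1
        · rw [if_pos h, if_neg]
          intro hs
          exact he (Prod.ext (Option.some_injective _ hs) h)
        · rw [if_neg h]
          simp
  · -- rank B = b
    have := rank_optIndicator
      (fun p : Fin a × Fin c => if (f p.2).1 = p.1 then some (f p.2).2 else none)
      (Matrix.of fun (x : Fin b) (y : Fin a × Fin c) => ψ y.1 x y.2) ?_
    · rw [this]
      rw [Fintype.card_congr (Equiv.subtypeUnivEquiv ?_), Fintype.card_fin]
      intro y
      obtain ⟨z, hz⟩ := hsnd_surj y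
      refine ⟨((f z).1, z), ?_⟩
      rw [if_pos rfl]
      exact congrArg some hz
    · intro x p
      show (if f p.2 = (p.1, x) then (1:ℂ) else 0)
          = if (if (f p.2).1 = p.1 then some (f p.2).2 else none) = some x then 1 else 0
      rcases eq_or_ne (f p.2) (p.1, x) with he | he
      · rw [if_pos he, if_pos (show (f p.2).1 = p.1 by rw [he]),
          if_pos (show some (f p.2).2 = some x by rw [he])]
      · rw [if_neg he]
        by_cases h : (f p.2).1 = p.1
        · rw [if_pos h, if_neg]
          intro hs
          exact he (Prod.ext h (Option.some_injective _ hs))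
        · rw [if_neg h]
          simp
  · -- rank AB = c
    have := rank_optIndicator
      (fun z : Fin c => some (f z))
      (Matrix.of fun (p : Fin a × Fin b) (z : Fin c) => ψ p.1 p.2 z) ?_
    · rw [this]
      have : Fintype.card {p : Fin a × Fin b // ∃ z, some (f z) = some p}
          = Fintype.card (Fin c) := by
        apply Fintype.card_congr
        refine Equiv.symm (Equiv.ofBijective (fun z => ⟨f z, z, rfl⟩) ?_)
        constructor
        · intro z w hzw
          exact hfinj (congrArg Subtype.val hzw)
        · rintro ⟨p, z, hz⟩
          exact ⟨z, Subtype.ext (by simpa using hz)⟩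
      convert this.trans (Fintype.card_fin c) using 2
    · intro p z
      show (if f z = (p.1, p.2) then (1:ℂ) else 0) = if some (f z) = some p then 1 else 0
      rw [Prod.mk.eta]
      rcases eq_or_ne (f z) p with he | he
      · rw [if_pos he, if_pos (congrArg some he)]
      · rw [if_neg he, if_neg (fun hs => he (Option.some_injective _ hs))]
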